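/- Fix γ ∈ (0,1) and μ > 0. Let g be a concave traveling wave with speed v, support [L,0], phenotypic threshold s, and breakpoint d. Then for all x ≥ L: Φ_s[g](x) = 1 − γ − x − μ·max(s − x, 0) if x > 0; Φ_s[g](x) = 1 − γ + g(x) − μ·max(s − x, 0) if d ≤ x ≤ 0; and Φ_s[g](x) = 1 − γ + g(d) − (d − x) − μ·max(s − x, 0) if L ≤ x < d. -/

import Mathlib

/-- `π(x) = x` if `x ≥ 0`, and `−∞` otherwise. -/
noncomputable def piE (x : EReal) : EReal := if 0 ≤ x then x else ⊥

/-- Concavity for `ℝ ∪ {−∞}`-valued functions (modeled as `ℝ → EReal`). -/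
def ConcaveE (h : ℝ → EReal) : Prop :=
  ∀ x x' t : ℝ, 0 ≤ t → t ≤ 1 →
    ((t : EReal) * h x + ((1 - t : ℝ) : EReal) * h x') ≤ h (t * x + (1 - t) * x')

/-- `Φ_ξ[g](x) = 1 − γ + sup_y ( g(y) − |x − y| ) − μ·max(ξ − x, 0)`. -/
noncomputable def Phi (γ μ : ℝ) (g : ℝ → EReal) (ξ x : ℝ) : EReal :=
  ((1 - γ : ℝ) : EReal) + (⨆ y : ℝ, g y - ((|x - y| : ℝ) : EReal))
    - ((μ * max (ξ - x) 0 : ℝ) : EReal)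

/-- The phenotypic threshold `s = sup{ ξ ∈ ℝ : sup_x Φ_ξ[g](x) ≥ γ }`. -/
noncomputable def sNext (γ μ : ℝ) (g : ℝ → EReal) : ℝ :=
  sSup {ξ : ℝ | (γ : EReal) ≤ ⨆ x : ℝ, Phi γ μ g ξ x}

/-- The deterministic dynamic: `g_n = π ∘ Φ_{s_n}[g_{n−1}]` with
`s_n = sNext γ μ g_{n−1}`. -/
noncomputable def gIter (γ μ : ℝ) (g0 : ℝ → EReal) : ℕ → ℝ → EReal
  | 0 => g0
  | n + 1 => fun x =>
      piE (Phi γ μ (gIter γ μ g0 n) (sNext γ μ (gIter γ μ g0 n)) x)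

/-- A concave `g` with `sup{x : g x > 0} = 0`, `L = inf{x : g x > 0} > −∞`
(and `g = −∞` outside `[L,0]`) is a traveling wave with speed `v` if the
dynamic has the effect of shifting `g` by `v` at every step. -/
def IsTravelingWave (γ μ : ℝ) (g : ℝ → EReal) (v L : ℝ) : Prop :=
  ConcaveE g ∧
  {x : ℝ | 0 < g x}.Nonempty ∧
  BddBelow {x : ℝ | 0 < g x} ∧
  sSup {x : ℝ | 0 < g x} = 0 ∧
  sInf {x : ℝ | 0 < g x} = L ∧
  (∀ x : ℝ, x ∉ Set.Icc L 0 → g x = ⊥) ∧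
  (∀ n : ℕ, 1 ≤ n → ∀ x : ℝ, gIter γ μ g n x = g (x - n * v))

/-- `d ∈ [L,0]` is the breakpoint of `g`: the slope of `g` is `> 1` on `(L,d)`
and `≤ 1` on `(d,0)`. -/
def IsBreakpoint (g : ℝ → EReal) (L d : ℝ) : Prop :=
  L ≤ d ∧ d ≤ 0 ∧
  (∀ a b : ℝ, L ≤ a → a < b → b ≤ d → g a + ((b - a : ℝ) : EReal) < g b) ∧
  (∀ a b : ℝ, d ≤ a → a < b → b ≤ 0 → g b ≤ g a + ((b - a : ℝ) : EReal))

open Filter Topology Set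

-- helpers
lemma ereal_sub_le_sub_add (A : EReal) (a b c : ℝ) (h : a ≤ b + c) :
    A - (b : EReal) ≤ (A - (a : EReal)) + (c : EReal) := by
  induction A using EReal.rec with
  | bot => rw [EReal.bot_sub]; exact bot_le
  | coe r =>
      rw [← EReal.coe_sub, ← EReal.coe_sub, ← EReal.coe_add]
      exact EReal.coe_le_coe_iff.2 (by linarith)
  | top => rw [EReal.top_sub_coe, EReal.top_sub_coe, EReal.top_add_coe]

lemma ereal_sub_coe_ne_bot {A : EReal} (hA : A ≠ ⊥) (r : ℝ) : A - (r : EReal) ≠ ⊥ := by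
  induction A using EReal.rec with
  | bot => exact absurd rfl hA
  | coe a => rw [← EReal.coe_sub]; exact EReal.coe_ne_bot _
  | top => rw [EReal.top_sub_coe]; exact top_ne_bot

lemma ereal_add_coe_ne_top {A : EReal} (hA : A ≠ ⊤) (r : ℝ) : A + (r : EReal) ≠ ⊤ := by
  induction A using EReal.rec with
  | bot => rw [EReal.bot_add]; exact bot_ne_top
  | coe a => rw [← EReal.coe_add]; exact EReal.coe_ne_top _
  | top => exact absurd rfl hA

noncomputable def hSup (g : ℝ → EReal) (x : ℝ) : EReal :=
  ⨆ y : ℝ, g y - ((|x - y| : ℝ) : EReal)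

lemma Phi_eq (γ μ : ℝ) (g : ℝ → EReal) (ξ x : ℝ) :
    Phi γ μ g ξ x
      = ((1 - γ : ℝ) : EReal) + hSup g x - ((μ * max (ξ - x) 0 : ℝ) : EReal) := rfl

/-- explicit formula for `Φ_s[g]` on `[L, ∞)` for a concave
traveling wave `g` with phenotypic threshold `s = sNext γ μ g` and breakpoint `d`. -/
theorem Phi_formula (γ μ : ℝ) (hγ : γ ∈ Set.Ioo (0 : ℝ) 1) (hμ : 0 < μ)
    (g : ℝ → EReal) (v L d : ℝ) (hg : IsTravelingWave γ μ g v L)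
    (hd : IsBreakpoint g L d) :
    ∀ x : ℝ, L ≤ x →
      (0 < x → Phi γ μ g (sNext γ μ g) x =
        ((1 - γ - x - μ * max (sNext γ μ g - x) 0 : ℝ) : EReal)) ∧
      (d ≤ x → x ≤ 0 → Phi γ μ g (sNext γ μ g) x =
        ((1 - γ : ℝ) : EReal) + g x - ((μ * max (sNext γ μ g - x) 0 : ℝ) : EReal)) ∧
      (x < d → Phi γ μ g (sNext γ μ g) x =
        ((1 - γ : ℝ) : EReal) + g d
          - (((d - x) + μ * max (sNext γ μ g - x) 0 : ℝ) : EReal)) := by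
  obtain ⟨hconc, hne, hbdd, hsup0, hinfL, hout, htw⟩ := hg
  obtain ⟨hLd, hd0, hslope1, hslope2⟩ := hd
  set s := sNext γ μ g with hs
  obtain ⟨x₀, hx₀⟩ := hne
  have hsub : {x : ℝ | 0 < g x} ⊆ Set.Icc L 0 := by
    intro p hp
    by_contra hpc
    rw [Set.mem_setOf_eq, hout p hpc] at hp
    exact absurd hp (by simp)
  have hbddA : BddAbove {x : ℝ | 0 < g x} := ⟨0, fun p hp => (hsub hp).2⟩
  have hL0 : L ≤ 0 := by
    rw [← hinfL, ← hsup0]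
    exact csInf_le_csSup ⟨x₀, hx₀⟩ hbdd hbddA
  -- positivity on the interior
  have hpos : ∀ z ∈ Set.Ioo L 0, 0 < g z := by
    intro z hz
    obtain ⟨p, hpS, hpz⟩ : ∃ p ∈ {x : ℝ | 0 < g x}, p < z := by
      by_contra hc; push_neg at hc
      have : z ≤ L := by rw [← hinfL]; exact le_csInf ⟨x₀, hx₀⟩ fun q hq => hc q hq
      exact absurd hz.1 (not_lt.2 this)
    obtain ⟨q, hqS, hzq⟩ : ∃ q ∈ {x : ℝ | 0 < g x}, z < q := by
      by_contra hc; push_neg at hc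
      have : (0 : ℝ) ≤ z := by rw [← hsup0]; exact csSup_le ⟨x₀, hx₀⟩ fun r hr => hc r hr
      exact absurd hz.2 (not_lt.2 this)
    have hpq : p < q := hpz.trans hzq
    set t := (q - z) / (q - p) with ht
    have ht0 : 0 < t := div_pos (by linarith) (by linarith)
    have ht1 : t < 1 := (div_lt_one (by linarith)).2 (by linarith)
    have hz_eq : t * p + (1 - t) * q = z := by
      have hne : q - p ≠ 0 := by linarith
      rw [ht]
      field_simp
      ring
    have hcc := hconc p q t ht0.le ht1.le
    rw [hz_eq] at hcc
    refine lt_of_lt_of_le ?_ hcc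
    have h1 : (0 : EReal) < (t : EReal) * g p :=
      EReal.mul_pos (EReal.coe_pos.2 ht0) hpS
    have h2 : (0 : EReal) < ((1 - t : ℝ) : EReal) * g q :=
      EReal.mul_pos (EReal.coe_pos.2 (by linarith)) hqS
    exact h1.trans_le (le_add_of_nonneg_right h2.le)
  -- traveling wave at n = 1
  have htw1 : ∀ x : ℝ, piE (Phi γ μ g s x) = g (x - v) := by
    intro x
    have h := htw 1 le_rfl x
    simpa [gIter, hs] using h
  -- hSup basic facts
  have hh_lb : ∀ x : ℝ, g x₀ - ((|x - x₀| : ℝ) : EReal) ≤ hSup g x :=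
    fun x => le_iSup (fun y => g y - ((|x - y| : ℝ) : EReal)) x₀
  have hh_ne_bot : ∀ x : ℝ, hSup g x ≠ ⊥ := by
    intro x h
    have := hh_lb x
    rw [h, le_bot_iff] at this
    exact ereal_sub_coe_ne_bot (ne_bot_of_gt hx₀) _ this
  have hh_lip : ∀ x x' : ℝ, hSup g x ≤ hSup g x' + ((|x - x'| : ℝ) : EReal) := by
    intro x x'
    refine iSup_le fun y => ?_
    have htri : |x' - y| ≤ |x - y| + |x - x'| := by
      have := abs_sub_le x' x y
      have h2 : |x' - x| = |x - x'| := abs_sub_comm _ _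
      linarith
    calc g y - ((|x - y| : ℝ) : EReal)
        ≤ (g y - ((|x' - y| : ℝ) : EReal)) + ((|x - x'| : ℝ) : EReal) :=
          ereal_sub_le_sub_add _ _ _ _ htri
      _ ≤ hSup g x' + ((|x - x'| : ℝ) : EReal) :=
          add_le_add (le_iSup (fun y => g y - ((|x' - y| : ℝ) : EReal)) y) le_rfl
  have hh_ne_top : ∀ x : ℝ, hSup g x ≠ ⊤ := by
    intro x hx
    have h1 : hSup g (1 + v) = ⊤ := by
      by_contra hc
      have := hh_lip x (1 + v)
      rw [hx, top_le_iff] at this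
      exact ereal_add_coe_ne_top hc _ this
    have h2 := htw1 (1 + v)
    rw [Phi_eq, h1, EReal.coe_add_top, EReal.top_sub_coe] at h2
    have h3 : piE ⊤ = ⊤ := if_pos le_top
    rw [h3] at h2
    have h4 : g ((1 + v) - v) = ⊥ := by
      rw [show (1 + v) - v = 1 by ring]
      exact hout 1 (by simp [Set.mem_Icc])
    rw [h4] at h2
    exact top_ne_bot h2
  -- real-valued versions
  set H : ℝ → ℝ := fun x => (hSup g x).toReal with hHdef
  have hH_eq : ∀ x : ℝ, ((H x : ℝ) : EReal) = hSup g x :=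
    fun x => EReal.coe_toReal (hh_ne_top x) (hh_ne_bot x)
  have hH_lip : ∀ x x' : ℝ, H x - H x' ≤ |x - x'| := by
    intro x x'
    have h := hh_lip x x'
    rw [← hH_eq, ← hH_eq, ← EReal.coe_add] at h
    have := EReal.coe_le_coe_iff.1 h
    linarith
  have hH_cont : Continuous H := by
    have : LipschitzWith 1 H := by
      refine LipschitzWith.of_dist_le_mul fun x y => ?_
      rw [Real.dist_eq, Real.dist_eq]
      have h1 := hH_lip x y
      have h2 := hH_lip y x
      rw [abs_sub_comm y x] at h2
      simpa using abs_sub_le_iff.2 ⟨h1, h2⟩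
    exact this.continuous
  set F : ℝ → ℝ := fun x => 1 - γ + H x - μ * max (s - x) 0 with hFdef
  have hF_cont : Continuous F := by
    rw [hFdef]
    exact ((continuous_const.add hH_cont).sub
      (continuous_const.mul ((continuous_const.sub continuous_id).max continuous_const)))
  have hPhiF : ∀ x : ℝ, Phi γ μ g s x = ((F x : ℝ) : EReal) := by
    intro x
    rw [Phi_eq, ← hH_eq, hFdef]
    norm_cast
  have hkey : ∀ z : ℝ, g z = if 0 ≤ F (z + v) then ((F (z + v) : ℝ) : EReal) else ⊥ := by
    intro z
    have h := htw1 (z + v)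
    rw [add_sub_cancel_right, hPhiF] at h
    rw [← h]
    unfold piE
    by_cases hc : 0 ≤ F (z + v)
    · rw [if_pos hc, if_pos (EReal.coe_nonneg.2 hc)]
    · rw [if_neg hc, if_neg (fun hcc => hc (EReal.coe_nonneg.1 hcc))]
  have hneg : ∀ z : ℝ, z ∉ Set.Icc L 0 → F (z + v) < 0 := by
    intro z hz
    have h1 := hkey z
    rw [hout z hz] at h1
    by_contra hc
    push_neg at hc
    rw [if_pos hc] at h1
    exact EReal.coe_ne_bot _ h1.symm
  have hIoo : ∀ z ∈ Set.Ioo L 0, g z = ((F (z + v) : ℝ) : EReal) ∧ 0 < F (z + v) := by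
    intro z hz
    have hp := hpos z hz
    have h1 := hkey z
    by_cases hc : 0 ≤ F (z + v)
    · rw [if_pos hc] at h1
      refine ⟨h1, ?_⟩
      rw [h1] at hp
      exact EReal.coe_pos.1 hp
    · rw [if_neg hc] at h1
      rw [h1] at hp
      simp at hp
  have htendF : ∀ (z₀ : ℝ) (l : Filter ℝ), l ≤ 𝓝 z₀ →
      Tendsto (fun z : ℝ => F (z + v)) l (𝓝 (F (z₀ + v))) := by
    intro z₀ l hl
    exact ((hF_cont.comp (continuous_id.add continuous_const)).tendsto z₀).mono_left hl
  have hFv_le : F (0 + v) ≤ 0 := by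
    refine le_of_tendsto (htendF 0 (𝓝[>] (0:ℝ)) nhdsWithin_le_nhds) ?_
    filter_upwards [self_mem_nhdsWithin] with z hz
    exact (hneg z (fun hzc => absurd hzc.2 (not_le.2 hz))).le
  have hg0_le : g 0 ≤ 0 := by
    rw [hkey 0]
    split_ifs with hc
    · exact_mod_cast hFv_le
    · exact bot_le
  have hLlt : L < 0 := by
    rcases lt_or_eq_of_le hL0 with h | h
    · exact h
    · exfalso
      have hx0m := hsub hx₀
      rw [h] at hx0m
      have : x₀ = 0 := le_antisymm hx0m.2 hx0m.1
      rw [Set.mem_setOf_eq, this] at hx₀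
      exact absurd (hx₀.trans_le hg0_le) (lt_irrefl 0)
  have hFv_ge : (0:ℝ) ≤ F (0 + v) := by
    refine ge_of_tendsto (htendF 0 (𝓝[<] (0:ℝ)) nhdsWithin_le_nhds) ?_
    filter_upwards [Ioo_mem_nhdsLT hLlt] with z hz
    exact (hIoo z hz).2.le
  have hFv : F (0 + v) = 0 := le_antisymm hFv_le hFv_ge
  have hg0 : g 0 = ((F (0 + v) : ℝ) : EReal) := by
    rw [hkey 0, if_pos hFv_ge]
  have hFL_le : F (L + v) ≤ 0 := by
    refine le_of_tendsto (htendF L (𝓝[<] L) nhdsWithin_le_nhds) ?_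
    filter_upwards [self_mem_nhdsWithin] with z hz
    exact (hneg z (fun hzc => absurd hzc.1 (not_le.2 hz))).le
  have hFL_ge : (0:ℝ) ≤ F (L + v) := by
    refine ge_of_tendsto (htendF L (𝓝[>] L) nhdsWithin_le_nhds) ?_
    filter_upwards [Ioo_mem_nhdsGT hLlt] with z hz
    exact (hIoo z hz).2.le
  have hgF : ∀ z ∈ Set.Icc L 0, g z = ((F (z + v) : ℝ) : EReal) := by
    intro z hz
    rcases eq_or_lt_of_le hz.1 with h | h
    · rw [← h, hkey L, if_pos hFL_ge]
    · rcases eq_or_lt_of_le hz.2 with h2 | h2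
      · rw [h2]; exact hg0
      · exact (hIoo z ⟨h, h2⟩).1
  -- slope ≥ -1 everywhere (from the fixed-point formula)
  have hFslope : ∀ a b : ℝ, a ≤ b → F (a + v) ≤ F (b + v) + (b - a) := by
    intro a b hab
    have h1 : H (a + v) - H (b + v) ≤ |a + v - (b + v)| := hH_lip (a + v) (b + v)
    have h1' : |a + v - (b + v)| = b - a := by
      rw [show a + v - (b + v) = a - b by ring, abs_sub_comm]
      exact abs_of_nonneg (by linarith)
    have h2 : max (s - (b + v)) 0 ≤ max (s - (a + v)) 0 :=
      max_le_max (by linarith) le_rfl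
    have h3 := mul_le_mul_of_nonneg_left h2 hμ.le
    simp only [hFdef]
    rw [h1'] at h1
    linarith
  -- real versions of the breakpoint slope conditions
  have hc3R : ∀ a b : ℝ, L ≤ a → a < b → b ≤ d → F (a + v) + (b - a) < F (b + v) := by
    intro a b ha hab hb
    have h := hslope1 a b ha hab hb
    rw [hgF a ⟨ha, by linarith⟩, hgF b ⟨by linarith, by linarith⟩, ← EReal.coe_add] at h
    exact_mod_cast h
  have hc4R : ∀ a b : ℝ, d ≤ a → a < b → b ≤ 0 → F (b + v) ≤ F (a + v) + (b - a) := by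
    intro a b ha hab hb
    have h := hslope2 a b ha hab hb
    rw [hgF a ⟨hLd.trans ha, by linarith⟩, hgF b ⟨by linarith [hLd.trans ha], hb⟩,
      ← EReal.coe_add] at h
    exact_mod_cast h
  -- the sup-convolution term in the three regions
  have hsup_gt : ∀ x : ℝ, 0 < x → hSup g x = ((-x : ℝ) : EReal) := by
    intro x hx
    refine le_antisymm (iSup_le fun y => ?_) ?_
    · by_cases hy : y ∈ Set.Icc L 0
      · rw [hgF y hy, ← EReal.coe_sub]
        refine EReal.coe_le_coe_iff.2 ?_
        have habs : |x - y| = x - y := abs_of_nonneg (by linarith [hy.2])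
        have hsl := hFslope y 0 hy.2
        rw [hFv] at hsl
        rw [habs]
        linarith
      · rw [hout y hy, EReal.bot_sub]; exact bot_le
    · refine le_trans ?_ (le_iSup (fun y => g y - ((|x - y| : ℝ) : EReal)) 0)
      rw [hgF 0 ⟨hL0, le_rfl⟩, ← EReal.coe_sub]
      refine EReal.coe_le_coe_iff.2 ?_
      rw [hFv, sub_zero, abs_of_pos hx]
      linarith
  have hsup_mid : ∀ x : ℝ, d ≤ x → x ≤ 0 → hSup g x = g x := by
    intro x hdx hx0
    have hxI : x ∈ Set.Icc L 0 := ⟨hLd.trans hdx, hx0⟩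
    refine le_antisymm (iSup_le fun y => ?_) ?_
    · by_cases hy : y ∈ Set.Icc L 0
      · rw [hgF y hy, hgF x hxI, ← EReal.coe_sub]
        refine EReal.coe_le_coe_iff.2 ?_
        rcases le_or_gt y x with hyx | hyx
        · have habs : |x - y| = x - y := abs_of_nonneg (by linarith)
          have hsl := hFslope y x hyx
          rw [habs]; linarith
        · have habs : |x - y| = y - x := by
            rw [abs_of_nonpos (by linarith)]; ring
          have hsl := hc4R x y hdx hyx hy.2
          rw [habs]; linarith
      · rw [hout y hy, EReal.bot_sub]; exact bot_le
    · refine le_trans ?_ (le_iSup (fun y => g y - ((|x - y| : ℝ) : EReal)) x)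
      rw [hgF x hxI, ← EReal.coe_sub]
      refine EReal.coe_le_coe_iff.2 ?_
      simp
  have hsup_lt : ∀ x : ℝ, L ≤ x → x < d → hSup g x = ((F (d + v) - (d - x) : ℝ) : EReal) := by
    intro x hLx hxd
    refine le_antisymm (iSup_le fun y => ?_) ?_
    · by_cases hy : y ∈ Set.Icc L 0
      · rw [hgF y hy, ← EReal.coe_sub]
        refine EReal.coe_le_coe_iff.2 ?_
        rcases lt_trichotomy y d with hyd | hyd | hyd
        · have hsl := hc3R y d hy.1 hyd le_rfl
          have h1 : -|x - y| ≤ x - y := neg_abs_le _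
          have h2 := neg_abs_le (y - x)
          rw [abs_sub_comm] at h2
          linarith
        · subst hyd
          have habs : |x - y| = y - x := by
            rw [abs_of_nonpos (by linarith)]; ring
          rw [habs]
        · have hsl := hc4R d y le_rfl hyd hy.2
          have habs : |x - y| = y - x := by
            rw [abs_of_nonpos (by linarith)]; ring
          rw [habs]; linarith
      · rw [hout y hy, EReal.bot_sub]; exact bot_le
    · refine le_trans ?_ (le_iSup (fun y => g y - ((|x - y| : ℝ) : EReal)) d)
      rw [hgF d ⟨hLd, hd0⟩, ← EReal.coe_sub]
      refine EReal.coe_le_coe_iff.2 ?_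
      have habs : |x - d| = d - x := by
        rw [abs_of_nonpos (by linarith)]; ring
      rw [habs]
  -- assembly
  intro x hLx
  refine ⟨fun hx => ?_, fun hdx hx0 => ?_, fun hxd => ?_⟩
  · rw [Phi_eq, hsup_gt x hx, ← EReal.coe_add, ← EReal.coe_sub]
    exact congrArg Real.toEReal (by ring)
  · rw [Phi_eq, hsup_mid x hdx hx0]
  · rw [Phi_eq, hsup_lt x hLx hxd, hgF d ⟨hLd, hd0⟩, ← EReal.coe_add, ← EReal.coe_sub,
      ← EReal.coe_add, ← EReal.coe_sub]
    exact congrArg Real.toEReal (by ring)
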